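/- Let C_s denote the number of planar rooted trees with signature s, with C_∅ = 1 (the unique single-node tree has empty signature). For every nonempty composition s = (s(1),…,s(a)), C_s = Σ ∏_{i=1}^{s(1)} C_{s_i}, where the sum ranges over all tuples (s_1, s_2, …, s_{s(1)}) of (possibly empty) compositions whose concatenation s_1 ⊕ s_2 ⊕ ⋯ ⊕ s_{s(1)} equals (s(2),…,s(a)). -/

import Mathlib

/-- A planar rooted tree: a root together with a (possibly empty) ordered list of subtrees. -/
inductive PTree : Type where
  | node : List PTree → PTree

namespace PTree

/-- The signature of a planar rooted tree: the numbers of children of its internal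
nodes, listed in preorder. -/
def signature : PTree → List ℕ
  | node [] => []
  | node (t :: ts) =>
    (t :: ts).length :: ((t :: ts).attach.map (fun x => signature x.1)).flatten
decreasing_by
  have := List.sizeOf_lt_of_mem x.2
  simp at this ⊢
  omega

/-- The preorder word of a planar rooted tree: `true` (= N) for each internal node and
`false` (= E) for each leaf, nodes listed in preorder. -/
def word : PTree → List Bool
  | node ts => (!ts.isEmpty) :: (ts.attach.map (fun x => word x.1)).flatten
decreasing_by
  have := List.sizeOf_lt_of_mem x.2
  simp at this ⊢
  omega

end PTree

section Aux

lemma sig_node_cons (u : PTree) (ts : List PTree) :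
    (PTree.node (u :: ts)).signature =
      (u :: ts).length :: ((u :: ts).map PTree.signature).flatten := by
  rw [PTree.signature]
  simp [List.attach_map_val]

lemma sig_eq_nil {T : PTree} (h : T.signature = []) : T = PTree.node [] := by
  cases T with
  | node ts =>
    cases ts with
    | nil => rfl
    | cons u ts => rw [sig_node_cons] at h; simp at h

lemma flatten_inj' {α : Type*} : ∀ (L1 L2 : List (List α)),
    L1.map List.length = L2.map List.length → L1.flatten = L2.flatten → L1 = L2
  | [], [], _, _ => rfl
  | [], _ :: _, h, _ => by simp at h
  | _ :: _, [], h, _ => by simp at h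
  | c1 :: L1, c2 :: L2, hl, hf => by
    simp only [List.map_cons, List.cons.injEq] at hl
    simp only [List.flatten_cons] at hf
    obtain ⟨hc, hrest⟩ := List.append_inj hf hl.1
    rw [hc, flatten_inj' L1 L2 hl.2 hrest]

lemma finite_S (k : ℕ) (t : List ℕ) :
    {L : List (List ℕ) | L.length = k ∧ L.flatten = t}.Finite := by
  rw [← Set.finite_coe_iff]
  have key : ∀ L : {L : List (List ℕ) | L.length = k ∧ L.flatten = t},
      ∀ c ∈ L.1, c.length < t.length + 1 := by
    rintro ⟨L, hk, hf⟩ c hc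
    have h1 : c.length ≤ (L.map List.length).sum :=
      List.le_sum_of_mem (List.mem_map_of_mem (f := List.length) hc)
    have h2 : (L.map List.length).sum = t.length := by rw [← List.length_flatten, hf]
    omega
  apply Finite.of_injective
    (fun (L : {L : List (List ℕ) | L.length = k ∧ L.flatten = t}) (i : Fin k) =>
      (⟨(L.1.get (Fin.cast L.2.1.symm i)).length, key L _ (List.get_mem _ _)⟩
        : Fin (t.length + 1)))
  rintro ⟨L1, h1, f1⟩ ⟨L2, h2, f2⟩ h
  have hlen : L1.map List.length = L2.map List.length := by
    apply List.ext_get (by simp [h1, h2])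
    intro i hi1 hi2
    have hik : i < k := by simpa [h1] using hi1
    have := congrArg Fin.val (congrFun h ⟨i, hik⟩)
    simpa using this
  exact Subtype.ext (flatten_inj' _ _ hlen (f1.trans f2.symm))

noncomputable def eqCons {α β : Type*} (f : α → β) (c : β) (L : List β) :
    {ts : List α // ts.map f = c :: L} ≃ ({u : α // f u = c} × {ts : List α // ts.map f = L}) :=
  (Equiv.ofBijective
    (fun p : {u : α // f u = c} × {ts : List α // ts.map f = L} =>
      (⟨p.1.1 :: p.2.1, by simp [p.1.2, p.2.2]⟩ : {ts : List α // ts.map f = c :: L}))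
    ⟨by
      rintro ⟨⟨u1, h1⟩, ⟨t1, g1⟩⟩ ⟨⟨u2, h2⟩, ⟨t2, g2⟩⟩ h
      simp only [Subtype.mk.injEq, List.cons.injEq] at h
      simp [h.1, h.2],
     by
      rintro ⟨ts, h⟩
      cases ts with
      | nil => simp at h
      | cons u ts =>
        simp only [List.map_cons, List.cons.injEq] at h
        exact ⟨⟨⟨u, h.1⟩, ⟨ts, h.2⟩⟩, rfl⟩⟩).symm

noncomputable def eqRoot (a : ℕ) (ha : a ≠ 0) (t : List ℕ) :
    {T : PTree // T.signature = a :: t} ≃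
      {ts : List PTree // ts.length = a ∧ (ts.map PTree.signature).flatten = t} :=
  (Equiv.ofBijective
    (fun p : {ts : List PTree // ts.length = a ∧ (ts.map PTree.signature).flatten = t} =>
      (⟨PTree.node p.1, by
        obtain ⟨ts, hlen, hf⟩ := p
        cases ts with
        | nil => exact absurd hlen.symm ha
        | cons u ts => rw [sig_node_cons, hlen, hf]⟩ : {T : PTree // T.signature = a :: t}))
    ⟨by
      rintro ⟨t1, h1⟩ ⟨t2, h2⟩ h
      simp only [Subtype.mk.injEq, PTree.node.injEq] at h
      simp [h],
     by
      rintro ⟨T, hT⟩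
      cases T with
      | node ts =>
        cases ts with
        | nil => simp [PTree.signature] at hT
        | cons u ts =>
          rw [sig_node_cons] at hT
          simp only [List.cons.injEq] at hT
          exact ⟨⟨u :: ts, hT.1, hT.2⟩, rfl⟩⟩).symm

noncomputable def eqSplit (k : ℕ) (t : List ℕ) :
    {ts : List PTree // ts.length = k ∧ (ts.map PTree.signature).flatten = t} ≃
      Σ L : {L : List (List ℕ) | L.length = k ∧ L.flatten = t},
        {ts : List PTree // ts.map PTree.signature = L.1} :=
  (Equiv.ofBijective
    (fun q : Σ L : {L : List (List ℕ) | L.length = k ∧ L.flatten = t},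
        {ts : List PTree // ts.map PTree.signature = L.1} =>
      (⟨q.2.1, by
        have hm : q.2.1.map PTree.signature = q.1.1 := q.2.2
        have h1 : q.1.1.length = k := q.1.2.1
        have h2 : q.1.1.flatten = t := q.1.2.2
        constructor
        · have := congrArg List.length hm; simpa [h1] using this
        · rw [hm, h2]⟩ :
        {ts : List PTree // ts.length = k ∧ (ts.map PTree.signature).flatten = t}))
    ⟨by
      rintro ⟨⟨L1, h1⟩, ts1, g1⟩ ⟨⟨L2, h2⟩, ts2, g2⟩ h
      simp only [Subtype.mk.injEq] at h
      subst h
      have hL : L1 = L2 := g1.symm.trans g2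
      subst hL
      rfl,
     by
      rintro ⟨ts, hlen, hf⟩
      exact ⟨⟨⟨ts.map PTree.signature, by simp [hlen, hf]⟩, ts, rfl⟩, rfl⟩⟩).symm

instance uniqueNilFiber {α β : Type*} (f : α → β) :
    Unique {ts : List α // ts.map f = []} where
  default := ⟨[], rfl⟩
  uniq := by
    rintro ⟨ts, h⟩
    cases ts with
    | nil => rfl
    | cons u ts => simp at h

lemma card_fiber (L : List (List ℕ)) :
    Nat.card {ts : List PTree // ts.map PTree.signature = L} =
      (L.map (fun c => Nat.card {T : PTree // T.signature = c})).prod := by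
  induction L with
  | nil => simp [Nat.card_unique]
  | cons c L ih =>
    rw [Nat.card_congr (eqCons PTree.signature c L), Nat.card_prod, ih]
    simp

lemma finite_fiber (L : List (List ℕ))
    (h : ∀ c ∈ L, Finite {T : PTree // T.signature = c}) :
    Finite {ts : List PTree // ts.map PTree.signature = L} := by
  induction L with
  | nil => infer_instance
  | cons c L ih =>
    haveI : Finite {T : PTree // T.signature = c} := h c (by simp)
    haveI : Finite {ts : List PTree // ts.map PTree.signature = L} :=
      ih (fun c' hc' => h c' (by simp [hc']))
    exact Finite.of_equiv _ (eqCons PTree.signature c L).symm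

lemma finite_sig_aux : ∀ (n : ℕ) (c : List ℕ), c.length ≤ n →
    Finite {T : PTree // T.signature = c} := by
  intro n
  induction n with
  | zero =>
    intro c hc
    have hcn : c = [] := List.eq_nil_of_length_eq_zero (Nat.le_zero.mp hc)
    subst hcn
    have : Subsingleton {T : PTree // T.signature = []} := by
      constructor
      rintro ⟨T1, h1⟩ ⟨T2, h2⟩
      exact Subtype.ext ((sig_eq_nil h1).trans (sig_eq_nil h2).symm)
    exact Finite.of_subsingleton
  | succ n ih =>
    intro c hc
    cases c with
    | nil =>
      have : Subsingleton {T : PTree // T.signature = []} := by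
        constructor
        rintro ⟨T1, h1⟩ ⟨T2, h2⟩
        exact Subtype.ext ((sig_eq_nil h1).trans (sig_eq_nil h2).symm)
      exact Finite.of_subsingleton
    | cons a t =>
      rcases Nat.eq_zero_or_pos a with rfl | ha
      · have : IsEmpty {T : PTree // T.signature = 0 :: t} := by
          constructor
          rintro ⟨T, hT⟩
          cases T with
          | node ts =>
            cases ts with
            | nil => simp [PTree.signature] at hT
            | cons u ts => rw [sig_node_cons] at hT; simp at hT
        infer_instance
      · haveI : Finite ↥{L : List (List ℕ) | L.length = a ∧ L.flatten = t} :=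
          (finite_S a t).to_subtype
        haveI : ∀ L : ↥{L : List (List ℕ) | L.length = a ∧ L.flatten = t},
            Finite {ts : List PTree // ts.map PTree.signature = L.1} := by
          intro L
          apply finite_fiber
          intro c' hc'
          apply ih
          have h1 : c'.length ≤ (L.1.map List.length).sum :=
            List.le_sum_of_mem (List.mem_map_of_mem (f := List.length) hc')
          have h2 : (L.1.map List.length).sum = t.length := by
            rw [← List.length_flatten, L.2.2]
          have h3 : t.length ≤ n := by simpa using hc
          omega
        exact Finite.of_equiv _ ((eqRoot a ha.ne' t).trans (eqSplit a t)).symm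

instance finite_sig (c : List ℕ) : Finite {T : PTree // T.signature = c} :=
  finite_sig_aux c.length c le_rfl

lemma card_sigma' {ι : Type*} [Finite ι] (α : ι → Type*) [∀ i, Finite (α i)] :
    Nat.card (Sigma α) = ∑ᶠ i, Nat.card (α i) := by
  cases nonempty_fintype ι
  haveI := fun i => Fintype.ofFinite (α i)
  rw [Nat.card_eq_fintype_card, Fintype.card_sigma, finsum_eq_sum_of_fintype]
  simp [Nat.card_eq_fintype_card]

end Aux

/-- The fundamental recurrence for `s`-Catalan numbers: for every nonempty composition
`s`, the number of trees with signature `s` equals the sum, over all tuples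
`(s₁, …, s_{s(1)})` of possibly empty compositions with
`s₁ ⊕ ⋯ ⊕ s_{s(1)} = (s(2),…,s(a))`, of the products `C_{s₁} ⋯ C_{s_{s(1)}}`. -/
theorem fundamental_recurrence (s : List ℕ) (hs : ∀ x ∈ s, 0 < x) (hne : s ≠ []) :
    Nat.card {T : PTree // T.signature = s} =
      ∑ᶠ L ∈ {L : List (List ℕ) | L.length = s.headI ∧ L.flatten = s.tail},
        (L.map (fun c => Nat.card {T : PTree // T.signature = c})).prod := by
  cases s with
  | nil => exact absurd rfl hne
  | cons a t =>
    have ha : a ≠ 0 := (hs a (by simp)).ne'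
    simp only [List.headI_cons, List.tail_cons]
    haveI : Finite ↥{L : List (List ℕ) | L.length = a ∧ L.flatten = t} :=
      (finite_S a t).to_subtype
    haveI : ∀ L : ↥{L : List (List ℕ) | L.length = a ∧ L.flatten = t},
        Finite {ts : List PTree // ts.map PTree.signature = L.1} :=
      fun L => finite_fiber _ (fun c _ => finite_sig c)
    calc Nat.card {T : PTree // T.signature = a :: t}
        = Nat.card (Σ L : {L : List (List ℕ) | L.length = a ∧ L.flatten = t},
            {ts : List PTree // ts.map PTree.signature = L.1}) :=
          Nat.card_congr ((eqRoot a ha t).trans (eqSplit a t))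
      _ = ∑ᶠ L : {L : List (List ℕ) | L.length = a ∧ L.flatten = t},
            Nat.card {ts : List PTree // ts.map PTree.signature = L.1} :=
          card_sigma' _
      _ = ∑ᶠ L : {L : List (List ℕ) | L.length = a ∧ L.flatten = t},
            (L.1.map (fun c => Nat.card {T : PTree // T.signature = c})).prod :=
          finsum_congr (fun L => card_fiber L.1)
      _ = ∑ᶠ L ∈ {L : List (List ℕ) | L.length = a ∧ L.flatten = t},
            (L.map (fun c => Nat.card {T : PTree // T.signature = c})).prod :=
          finsum_set_coe_eq_finsum_mem
            (f := fun (L : List (List ℕ)) =>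
              (L.map (fun c => Nat.card {T : PTree // T.signature = c})).prod) _
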